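/- For every real number v with |v| ≤ 2.1, setting w = tanh v − v, one has −w·(w + 0.5379·v) ≥ 0; equivalently, (v − tanh v)·(tanh v − 0.4621·v) ≥ 0 for all v ∈ [−2.1, 2.1]. -/

import Mathlib

private lemma hasDerivAt_tanh' (x : ℝ) :
    HasDerivAt Real.tanh (1 / Real.cosh x ^ 2) x := by
  have h := (Real.hasDerivAt_sinh x).div (Real.hasDerivAt_cosh x)
    (ne_of_gt (Real.cosh_pos x))
  have heq : (Real.cosh x * Real.cosh x - Real.sinh x * Real.sinh x) / Real.cosh x ^ 2
      = 1 / Real.cosh x ^ 2 := by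
    have := Real.cosh_sq_sub_sinh_sq x
    rw [show Real.cosh x * Real.cosh x - Real.sinh x * Real.sinh x
      = Real.cosh x ^ 2 - Real.sinh x ^ 2 by ring, this]
  rw [heq] at h
  have hf : Real.tanh = Real.sinh / Real.cosh := by
    funext y
    exact Real.tanh_eq_sinh_div_cosh y
  rw [hf]
  exact h

private lemma tanh_le_self' {v : ℝ} (h0 : 0 ≤ v) : Real.tanh v ≤ v := by
  have hmono : Monotone (fun x => x - Real.tanh x) := by
    have hd : ∀ x : ℝ, HasDerivAt (fun x => x - Real.tanh x)
        (1 - 1 / Real.cosh x ^ 2) x := fun x =>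
      (hasDerivAt_id x).sub (hasDerivAt_tanh' x)
    apply monotone_of_deriv_nonneg
    · exact fun x => (hd x).differentiableAt
    · intro x
      rw [(hd x).deriv]
      have h1 : 1 ≤ Real.cosh x := Real.one_le_cosh x
      have h2 : (0:ℝ) < Real.cosh x ^ 2 := by positivity
      rw [sub_nonneg, div_le_one h2]
      nlinarith
  have := hmono h0
  simpa [Real.tanh_zero] using this

private lemma tanh_concave' : ConcaveOn ℝ (Set.Icc (0:ℝ) 2.1) Real.tanh := by
  apply AntitoneOn.concaveOn_of_deriv (convex_Icc _ _)
  · exact fun x _ => (hasDerivAt_tanh' x).continuousAt.continuousWithinAt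
  · exact fun x _ => (hasDerivAt_tanh' x).differentiableAt.differentiableWithinAt
  · intro x hx y hy hxy
    rw [interior_Icc] at hx hy
    rw [(hasDerivAt_tanh' x).deriv, (hasDerivAt_tanh' y).deriv]
    have hcx : 1 ≤ Real.cosh x := Real.one_le_cosh x
    have hcy : Real.cosh x ≤ Real.cosh y := by
      rw [Real.cosh_le_cosh, abs_of_pos hx.1, abs_of_pos hy.1]
      exact hxy
    have h2 : (0:ℝ) < Real.cosh x ^ 2 := by positivity
    have h3 : Real.cosh x ^ 2 ≤ Real.cosh y ^ 2 := by nlinarith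
    exact one_div_le_one_div_of_le h2 h3

private lemma tanh_21_bound : (0.97041 : ℝ) ≤ Real.tanh 2.1 := by
  set E := Real.exp 2.1 with hE
  have hEpos : 0 < E := Real.exp_pos _
  have hElb : (8.1649 : ℝ) ≤ E := by
    have h2 : Real.exp 2.1 = Real.exp 1 ^ 2 * Real.exp 0.1 := by
      rw [← Real.exp_nat_mul, ← Real.exp_add]; norm_num
    have he1 : (2.7182818283 : ℝ) ≤ Real.exp 1 := le_of_lt Real.exp_one_gt_d9
    have he01 : (1.105 : ℝ) ≤ Real.exp 0.1 := by
      have := Real.quadratic_le_exp_of_nonneg (x := 0.1) (by norm_num)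
      nlinarith
    rw [hE, h2]
    nlinarith [Real.exp_pos 1, Real.exp_pos 0.1]
  have hneg : Real.exp (-2.1) = E⁻¹ := by rw [Real.exp_neg]
  rw [Real.tanh_eq_sinh_div_cosh, Real.sinh_eq, Real.cosh_eq, hneg, ← hE]
  rw [le_div_iff₀ (by positivity)]
  have hinv : E⁻¹ * E = 1 := inv_mul_cancel₀ (ne_of_gt hEpos)
  nlinarith [sq_nonneg E, mul_pos hEpos hEpos]

private lemma key_lemma {v : ℝ} (h0 : 0 ≤ v) (h1 : v ≤ 2.1) :
    (v - Real.tanh v) * (Real.tanh v - 0.4621 * v) ≥ 0 := by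
  have f1 : Real.tanh v ≤ v := tanh_le_self' h0
  have f2 : 0.4621 * v ≤ Real.tanh v := by
    have hc := tanh_concave'
    have hmem0 : (0:ℝ) ∈ Set.Icc (0:ℝ) 2.1 := by norm_num
    have hmem1 : (2.1:ℝ) ∈ Set.Icc (0:ℝ) 2.1 := by norm_num
    have ha : (0:ℝ) ≤ 1 - v / 2.1 := by
      rw [sub_nonneg, div_le_one (by norm_num)]; exact h1
    have hb : (0:ℝ) ≤ v / 2.1 := by positivity
    have hab : (1 - v / 2.1) + v / 2.1 = 1 := by ring
    have hch := hc.2 hmem0 hmem1 ha hb hab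
    have harg : (1 - v / 2.1) • (0:ℝ) + (v / 2.1) • (2.1:ℝ) = v := by
      simp [smul_eq_mul]
      field_simp
    rw [harg] at hch
    simp only [smul_eq_mul, Real.tanh_zero, mul_zero, zero_add] at hch
    have h21 := tanh_21_bound
    calc 0.4621 * v = v / 2.1 * 0.97041 := by ring
      _ ≤ v / 2.1 * Real.tanh 2.1 := by
          apply mul_le_mul_of_nonneg_left h21 hb
      _ ≤ Real.tanh v := hch
  have := mul_nonneg (sub_nonneg.2 f1) (sub_nonneg.2 f2)
  linarith

private lemma key_all {v : ℝ} (hv : |v| ≤ 2.1) :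
    (v - Real.tanh v) * (Real.tanh v - 0.4621 * v) ≥ 0 := by
  rcases le_or_gt 0 v with h | h
  · exact key_lemma h (le_trans (le_abs_self v) hv)
  · have h0 : 0 ≤ -v := by linarith
    have h1 : -v ≤ 2.1 := le_trans (neg_le_abs v) hv
    have := key_lemma h0 h1
    rw [Real.tanh_neg] at this
    nlinarith [this]

/-- Sector constraint on `Δ(v) = tanh v - v` from the triple-integrator example of
Section V of the paper: `-w (w + 0.5379 v) ≥ 0` with `w = tanh v - v`, for `|v| ≤ 2.1`;
equivalently `(v - tanh v)(tanh v - 0.4621 v) ≥ 0`. -/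
theorem stmt_9 (v : ℝ) (hv : |v| ≤ 2.1) :
    -(Real.tanh v - v) * ((Real.tanh v - v) + 0.5379 * v) ≥ 0 ∧
      (v - Real.tanh v) * (Real.tanh v - 0.4621 * v) ≥ 0 := by
  have key := key_all hv
  constructor
  · nlinarith [key]
  · exact key
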